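/- Let f : [0,∞) → ℝ be upper right-continuous and g_t := sup_{0 ≤ u ≤ t} f_u its running supremum. Then g is nondecreasing and right-continuous, and the Stieltjes measure dg is carried by the set {t ≥ 0 : g_t = f_t ∨ g_{t⁻}} ⊆ {t : g_t = f_t} ∪ {0}. -/

import Mathlib

open Set Filter Topology

private lemma aux_ev (f : ℝ → ℝ) (t a : ℝ) (ht : 0 ≤ t)
    (h : limsup f (𝓝[>] t) ≤ f t)
    (hbdd : ∀ t : ℝ, 0 ≤ t → BddAbove (f '' Icc 0 t))
    (ha : f t < a) : ∀ᶠ u in 𝓝[>] t, f u < a := by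
  obtain ⟨M, hM⟩ := hbdd (t + 1) (by linarith)
  have hbU : IsBoundedUnder (· ≤ ·) (𝓝[>] t) f := by
    refine ⟨M, eventually_map.2 ?_⟩
    filter_upwards [Ioc_mem_nhdsGT (lt_add_one t)] with u hu
    exact hM ⟨u, ⟨le_trans ht hu.1.le, hu.2⟩, rfl⟩
  exact eventually_lt_of_limsup_lt (lt_of_le_of_lt h ha) hbU

/-- The running supremum `g` of an upper right-continuous function `f` is nondecreasing and
right-continuous, and the Stieltjes measure `dg` is carried by `{t : g t = f t}`: `g` can
increase on an interval `[s,t] ⊆ [0,∞)` only if `g` meets `f` somewhere in `[s,t]`. -/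
theorem stmt_15 (f : ℝ → ℝ)
    (hf : ∀ t : ℝ, 0 ≤ t → limsup f (𝓝[>] t) ≤ f t)
    (hbdd : ∀ t : ℝ, 0 ≤ t → BddAbove (f '' Icc 0 t))
    (g : ℝ → ℝ) (hg : ∀ t : ℝ, 0 ≤ t → g t = sSup (f '' Icc 0 t)) :
    MonotoneOn g (Ici 0) ∧
    (∀ t : ℝ, 0 ≤ t → ContinuousWithinAt g (Ici t) t) ∧
    (∀ s t : ℝ, 0 ≤ s → s ≤ t → g s < g t → ∃ u ∈ Icc s t, g u = f u) := by
  -- basic facts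
  have hne : ∀ t : ℝ, 0 ≤ t → (f '' Icc 0 t).Nonempty :=
    fun t ht => ⟨f 0, ⟨0, ⟨le_refl 0, ht⟩, rfl⟩⟩
  have hmono : MonotoneOn g (Ici 0) := by
    intro a ha b hb hab
    rw [hg a ha, hg b hb]
    exact csSup_le_csSup (hbdd b hb) (hne a ha)
      (image_mono (Icc_subset_Icc_right hab))
  have hfg : ∀ u : ℝ, 0 ≤ u → f u ≤ g u := by
    intro u hu
    rw [hg u hu]
    exact le_csSup (hbdd u hu) ⟨u, ⟨hu, le_refl u⟩, rfl⟩
  -- a bound on g w: if all values of f on [0,w] are ≤ b then g w ≤ b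
  have hgle : ∀ w b : ℝ, 0 ≤ w → (∀ y, 0 ≤ y → y ≤ w → f y ≤ b) → g w ≤ b := by
    intro w b hw hb
    rw [hg w hw]
    exact csSup_le (hne w hw) (by rintro x ⟨y, hy, rfl⟩; exact hb y hy.1 hy.2)
  refine ⟨hmono, ?_, ?_⟩
  · -- right continuity
    intro t ht
    rw [ContinuousWithinAt]
    rw [tendsto_order]
    constructor
    · intro a ha
      filter_upwards [self_mem_nhdsWithin] with w hw
      exact lt_of_lt_of_le ha (hmono ht (le_trans ht hw) hw)
    · intro a ha
      set a' : ℝ := (g t + a) / 2 with ha'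
      have h1 : g t < a' := by simp only [ha']; linarith
      have h2 : a' < a := by simp only [ha']; linarith
      have hev := aux_ev f t a' ht (hf t ht) hbdd (lt_of_le_of_lt (hfg t ht) h1)
      obtain ⟨u', hu', hsub⟩ := mem_nhdsGT_iff_exists_Ioo_subset.1 hev
      have : Ico t u' ∈ 𝓝[≥] t := by
        apply mem_nhdsWithin.2
        exact ⟨Iio u', isOpen_Iio, hu', by
          intro x hx; exact ⟨hx.2, hx.1⟩⟩
      filter_upwards [this] with w hw
      rcases eq_or_lt_of_le hw.1 with h | h
      · rw [← h]; linarith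
      · have hgw : g w ≤ a' := by
          apply hgle w a' (le_trans ht hw.1)
          intro y hy hyw
          rcases le_or_gt y t with hyt | hyt
          · exact le_trans (le_trans (hfg y hy) (hmono hy ht hyt)) h1.le
          · exact (hsub ⟨hyt, lt_of_le_of_lt hyw hw.2⟩).le
        linarith
  · -- flat-off property
    intro s t hs hst hgst
    have ht : (0:ℝ) ≤ t := le_trans hs hst
    set c : ℝ := (g s + g t) / 2 with hc
    have hc1 : g s < c := by simp only [hc]; linarith
    have hc2 : c < g t := by simp only [hc]; linarith
    set B : Set ℝ := {w ∈ Icc s t | g w ≤ c} with hB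
    have hsB : s ∈ B := ⟨⟨le_refl s, hst⟩, hc1.le⟩
    have hBne : B.Nonempty := ⟨s, hsB⟩
    have hBbdd : BddAbove B := ⟨t, fun w hw => hw.1.2⟩
    set v : ℝ := sSup B with hv
    have hsv : s ≤ v := le_csSup hBbdd hsB
    have hvt : v ≤ t := csSup_le hBne (fun w hw => hw.1.2)
    have h0v : (0:ℝ) ≤ v := le_trans hs hsv
    -- all values of f strictly before v are ≤ c
    have hbefore : ∀ y, 0 ≤ y → y < v → f y ≤ c := by
      intro y hy hyv
      rcases le_or_gt y s with hys | hys
      · exact le_trans (le_trans (hfg y hy) (hmono hy hs hys)) hc1.le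
      · obtain ⟨w, hwB, hyw⟩ := exists_lt_of_lt_csSup hBne hyv
        exact le_trans (le_trans (hfg y hy)
          (hmono hy (le_trans hs hwB.1.1) hyw.le)) hwB.2
    refine ⟨v, ⟨hsv, hvt⟩, ?_⟩
    rcases le_or_gt (g v) c with hgc | hgc
    · -- case g v ≤ c : show f v = g v = c (f v < c is impossible)
      have hvlt : v < t := by
        rcases eq_or_lt_of_le hvt with h | h
        · exfalso; rw [h] at hgc; linarith
        · exact h
      by_contra hne'
      have hfvc : f v < c := lt_of_le_of_ne (le_trans (hfg v h0v) hgc)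
        (fun h => hne' (le_antisymm (h ▸ hgc) (hfg v h0v)))
      obtain ⟨u', hu', hsub⟩ := mem_nhdsGT_iff_exists_Ioo_subset.1
        (aux_ev f v c h0v (hf v h0v) hbdd hfvc)
      set w : ℝ := min ((v + u') / 2) t with hw
      have hvw : v < w := lt_min (by simp only [Ioi] at hu'; linarith [mem_Ioi.1 hu']) hvlt
      have hwB' : w ∈ B := by
        refine ⟨⟨le_trans hsv hvw.le, min_le_right _ _⟩, ?_⟩
        apply hgle w c (le_trans h0v hvw.le)
        intro y hy hyw
        rcases lt_or_ge y v with hyv | hyv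
        · exact hbefore y hy hyv
        · rcases eq_or_lt_of_le hyv with h | h
          · rw [← h]; exact le_trans (hfg v h0v) hgc
          · refine (hsub ⟨h, ?_⟩).le
            have : w ≤ (v + u') / 2 := min_le_left _ _
            have hu'' := mem_Ioi.1 hu'
            linarith
      exact absurd (le_csSup hBbdd hwB') (not_le.2 hvw)
    · -- case g v > c : all values before v are ≤ c < g v, so g v = f v
      have h1 : g v ≤ max c (f v) := by
        apply hgle v (max c (f v)) h0v
        intro y hy hyv
        rcases eq_or_lt_of_le hyv with h | h
        · rw [h]; exact le_max_right _ _
        · exact le_trans (hbefore y hy h) (le_max_left _ _)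
      have h2 : g v ≤ f v := by
        rcases max_cases c (f v) with ⟨h, _⟩ | ⟨h, _⟩
        · rw [h] at h1; linarith
        · rwa [h] at h1
      exact le_antisymm h2 (hfg v h0v)
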